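/- Let G_{s,r} be the (n+1)×(n+1) matrix with block diagonal form diag(I_s, E_r, E_{n-s-r+1}) modified so that the row just below the E_r block has the vector a (of dimension s) in its first s entries and a 1 in its (s+r)-th column; here E_m denotes the m×m matrix with 1's on the subdiagonal and 0's elsewhere. Then for s ≥ 1, r ≥ 0, n-s-r-1 ≥ 0 and a a nonzero row vector of dimension s over an algebraically closed field k of characteristic p with q a power of p, one has G_{s,r} ∼ G_{s,r+2}', where G_{s,r+2}' is the analogous matrix with E_r replaced by E_{r+2}, E_{n-s-r+1} replaced by E_{n-s-r-1}, and a replaced by a^(q²) (entrywise q²-th power). Explicitly, an invertible matrix T_G with ᵗT_G G_{s,r} T_G^(q) = G_{s,r+2}' is given by the identity matrix modified by placing -ᵗa in rows 1..s of column s+r+1, and a^(q) in the first s columns of row s+r+2. -/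

import Mathlib

open Matrix

/-- The matrix `G_{s,r}`: block diagonal `diag(I_s, E_r, E_{n-s-r+1})`, with an
extra `1` at position `(s+r, s+r-1)` (the "0⋯0 1" block) and the row vector `a`
placed in the first `s` entries of row `s+r`.  Since the subdiagonal `1`s of the
`E_r` block, the extra `1`, and the subdiagonal `1`s of the `E_{n-s-r+1}` block
together form the full subdiagonal in columns `s, …, n-1`, the matrix has the
following entrywise description. -/
def Gmat (k : Type*) [Field k] (n s r : ℕ) (a : Fin (n + 1) → k) :
    Matrix (Fin (n + 1)) (Fin (n + 1)) k :=
  fun i j =>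
    (if i = j ∧ (j : ℕ) < s then 1 else 0) +
    (if (i : ℕ) = (j : ℕ) + 1 ∧ s ≤ (j : ℕ) then 1 else 0) +
    (if (i : ℕ) = s + r ∧ (j : ℕ) < s then a j else 0)

/-- The explicit transformation `T_G`: the identity matrix, modified by placing
`-ᵗa` in the first `s` rows of column `s+r`, and `a^{(q)}` in the first `s`
columns of row `s+r+1`. -/
def TGmat (k : Type*) [Field k] (n s r q : ℕ) (a : Fin (n + 1) → k) :
    Matrix (Fin (n + 1)) (Fin (n + 1)) k :=
  fun i j =>
    (if i = j then 1 else 0) +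
    (if (j : ℕ) = s + r ∧ (i : ℕ) < s then -(a i) else 0) +
    (if (i : ℕ) = s + r + 1 ∧ (j : ℕ) < s then a j ^ q else 0)


section AuxGmat

open Matrix

variable {k : Type*} [Field k] {m n s r : ℕ}

private lemma sum_single_aux (g : Fin m → k) (v : Fin m) :
    ∑ i, (if i = v then (1:k) else 0) * g i = g v := by
  rw [Finset.sum_eq_single v] <;> simp +contextual

private lemma sum_single_aux' (g : Fin m → k) (v : Fin m) :
    ∑ i, g i * (if i = v then (1:k) else 0) = g v := by
  rw [Finset.sum_eq_single v] <;> simp +contextual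

private lemma mulVV (x y z t : Fin m → k) :
    vecMulVec x y * vecMulVec z t = (∑ i, y i * z i) • vecMulVec x t := by
  ext i j
  simp only [mul_apply, vecMulVec_apply, Matrix.smul_apply, smul_eq_mul, Finset.sum_mul]
  apply Finset.sum_congr rfl
  intros; ring

private lemma mul_vVV (A : Matrix (Fin m) (Fin m) k) (z t : Fin m → k) :
    A * vecMulVec z t = vecMulVec (A *ᵥ z) t := by
  ext i j
  simp only [mul_apply, vecMulVec_apply, mulVec, dotProduct, Finset.sum_mul]
  apply Finset.sum_congr rfl
  intros; ring

private lemma vVV_mul (A : Matrix (Fin m) (Fin m) k) (x y : Fin m → k) :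
    vecMulVec x y * A = vecMulVec x (y ᵥ* A) := by
  ext i j
  simp only [mul_apply, vecMulVec_apply, vecMul, dotProduct, Finset.mul_sum]
  apply Finset.sum_congr rfl
  intros; ring

private lemma vVV_tr (x y : Fin m → k) : (vecMulVec x y)ᵀ = vecMulVec y x := by
  ext i j; simp [vecMulVec_apply, mul_comm]

/-- the common `diagonal ⊕ subdiagonal` part of the matrices `Gmat` -/
private def G0mat (k : Type*) [Field k] (n s : ℕ) :
    Matrix (Fin (n + 1)) (Fin (n + 1)) k := Matrix.of fun i j =>
  (if i = j ∧ (j : ℕ) < s then 1 else 0) +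
  (if (i : ℕ) = (j : ℕ) + 1 ∧ s ≤ (j : ℕ) then 1 else 0)

private def eVec (k : Type*) [Field k] {n : ℕ} (u : Fin (n + 1)) : Fin (n + 1) → k :=
  fun i => if i = u then 1 else 0

private def cVec (k : Type*) [Field k] (n s : ℕ) (a : Fin (n + 1) → k) : Fin (n + 1) → k :=
  fun i => if (i : ℕ) < s then a i else 0

private lemma evG0 (hs : 1 ≤ s) (hvn : s + r + 1 < n + 1) (hun : s + r < n + 1) :
    (eVec k ⟨s + r + 1, hvn⟩) ᵥ* (G0mat k n s) = eVec k ⟨s + r, hun⟩ := by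
  funext j
  show (∑ i, (if i = (⟨s + r + 1, hvn⟩ : Fin (n+1)) then (1:k) else 0) * G0mat k n s i j) = _
  rw [sum_single_aux (fun i => G0mat k n s i j)]
  simp only [G0mat, of_apply, eVec]
  split_ifs <;> simp_all [Fin.ext_iff] <;> omega

private lemma G0ev (hs : 1 ≤ s) (hvn : s + r + 1 < n + 1) (hwn : s + r + 2 < n + 1) :
    (G0mat k n s) *ᵥ (eVec k ⟨s + r + 1, hvn⟩) = eVec k ⟨s + r + 2, hwn⟩ := by
  funext i
  show (∑ j, G0mat k n s i j * (if j = (⟨s + r + 1, hvn⟩ : Fin (n+1)) then (1:k) else 0)) = _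
  rw [sum_single_aux' (fun j => G0mat k n s i j)]
  simp only [G0mat, of_apply, eVec]
  split_ifs <;> simp_all [Fin.ext_iff] <;> omega

private lemma cG0 (f : Fin (n + 1) → k) (hf : ∀ i : Fin (n + 1), ¬ ((i:ℕ) < s) → f i = 0) :
    f ᵥ* (G0mat k n s) = f := by
  funext j
  simp only [vecMul, dotProduct, G0mat, of_apply, mul_add]
  rw [Finset.sum_add_distrib]
  have h1 : ∑ i : Fin (n+1), f i * (if i = j ∧ (j : ℕ) < s then 1 else 0) = f j := by
    rw [Finset.sum_eq_single j]
    · split_ifs with h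
      · simp
      · have hjs : ¬ ((j:ℕ) < s) := fun hlt => h ⟨rfl, hlt⟩
        rw [hf j hjs]; ring
    · intro i _ hi
      rw [if_neg (fun hc => hi hc.1), mul_zero]
    · simp
  have h2 : ∑ i : Fin (n+1), f i * (if (i : ℕ) = (j : ℕ) + 1 ∧ s ≤ (j : ℕ) then 1 else 0) = 0 := by
    apply Finset.sum_eq_zero
    intro i _
    by_cases h : (i : ℕ) = (j : ℕ) + 1 ∧ s ≤ (j : ℕ)
    · rw [hf i (by omega), zero_mul]
    · rw [if_neg h, mul_zero]
  rw [h1, h2, add_zero]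

private lemma G0c (f : Fin (n + 1) → k) (hf : ∀ i : Fin (n + 1), ¬ ((i:ℕ) < s) → f i = 0) :
    (G0mat k n s) *ᵥ f = f := by
  funext i
  simp only [mulVec, dotProduct, G0mat, of_apply, add_mul]
  rw [Finset.sum_add_distrib]
  have h1 : ∑ j : Fin (n+1), (if i = j ∧ (j : ℕ) < s then (1:k) else 0) * f j = f i := by
    rw [Finset.sum_eq_single i]
    · split_ifs with h
      · simp
      · have his : ¬ ((i:ℕ) < s) := fun hlt => h ⟨rfl, hlt⟩
        rw [hf i his]; ring
    · intro j _ hj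
      rw [if_neg (fun hc => hj (hc.1.symm)), zero_mul]
    · simp
  have h2 : ∑ j : Fin (n+1), (if (i : ℕ) = (j : ℕ) + 1 ∧ s ≤ (j : ℕ) then (1:k) else 0) * f j = 0 := by
    apply Finset.sum_eq_zero
    intro j _
    by_cases h : (i : ℕ) = (j : ℕ) + 1 ∧ s ≤ (j : ℕ)
    · rw [hf j (by omega), mul_zero]
    · rw [if_neg h, zero_mul]
  rw [h1, h2, add_zero]

variable (n s r) in
private lemma Gmat_decomp (a : Fin (n + 1) → k) :
    Gmat k n s r a = G0mat k n s +
      vecMulVec (fun i : Fin (n + 1) => if (i : ℕ) = s + r then (1:k) else 0) (cVec k n s a) := by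
  ext i j
  simp only [Gmat, G0mat, Matrix.add_apply, of_apply, vecMulVec_apply, cVec]
  split_ifs <;> (try simp_all [Fin.ext_iff]) <;> (try ring) <;> omega

private lemma G0evN (hvn : s + r + 1 < n + 1) :
    (G0mat k n s) *ᵥ (eVec k ⟨s + r + 1, hvn⟩) =
      fun i : Fin (n + 1) => if (i : ℕ) = s + r + 2 then (1:k) else 0 := by
  funext i
  show (∑ j, G0mat k n s i j * (if j = (⟨s + r + 1, hvn⟩ : Fin (n+1)) then (1:k) else 0)) = _
  rw [sum_single_aux' (fun j => G0mat k n s i j)]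
  simp only [G0mat, of_apply]
  split_ifs <;> (try simp_all [Fin.ext_iff]) <;> omega

variable (n s r) in
private lemma TGmat_decomp (q : ℕ) (a : Fin (n + 1) → k) (hq0 : 0 < q)
    (hun : s + r < n + 1) (hvn : s + r + 1 < n + 1) :
    TGmat k n s r q a = 1 +
      (vecMulVec (eVec k ⟨s + r + 1, hvn⟩) (fun j => cVec k n s a j ^ q) -
        vecMulVec (cVec k n s a) (eVec k ⟨s + r, hun⟩)) := by
  ext i j
  simp only [TGmat, Matrix.add_apply, Matrix.sub_apply, one_apply, vecMulVec_apply, eVec, cVec]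
  split_ifs <;> (try simp_all [Fin.ext_iff, zero_pow hq0.ne']) <;> (try ring) <;> omega

end AuxGmat

/-- Lemma 1: `G_{s,r} ∼ G_{s,r+2}` via the explicit matrix `T_G`. -/
theorem Gmat_equiv (p q e n s r : ℕ) (hp : p.Prime) (he : 0 < e) (hq : q = p ^ e)
    (k : Type*) [Field k] [IsAlgClosed k] [CharP k p]
    (hs : 1 ≤ s) (hnsr : s + r + 1 ≤ n)
    (a : Fin (n + 1) → k) (ha : ∃ j : Fin (n + 1), (j : ℕ) < s ∧ a j ≠ 0) :
    IsUnit (TGmat k n s r q a).det ∧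
      (TGmat k n s r q a)ᵀ * Gmat k n s r a * (TGmat k n s r q a).map (fun x => x ^ q) =
        Gmat k n s (r + 2) (fun j => a j ^ (q ^ 2)) := by
  haveI := Fact.mk hp
  have hq0 : 0 < q := hq ▸ pow_pos hp.pos e
  have hun : s + r < n + 1 := by omega
  have hvn : s + r + 1 < n + 1 := by omega
  set u : Fin (n + 1) := ⟨s + r, hun⟩ with hu
  set v : Fin (n + 1) := ⟨s + r + 1, hvn⟩ with hv
  set c : Fin (n + 1) → k := cVec k n s a with hcdef
  set cq : Fin (n + 1) → k := fun j => c j ^ q with hcq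
  set cq2 : Fin (n + 1) → k := fun j => c j ^ q ^ 2 with hcq2
  set eu : Fin (n + 1) → k := eVec k u with heu
  set ev : Fin (n + 1) → k := eVec k v with hev
  set ew : Fin (n + 1) → k := fun i : Fin (n + 1) => if (i : ℕ) = s + r + 2 then (1:k) else 0 with hew
  set G0 : Matrix (Fin (n + 1)) (Fin (n + 1)) k := G0mat k n s with hG0
  have hc0 : ∀ i : Fin (n + 1), ¬ ((i:ℕ) < s) → c i = 0 := by
    intro i hi; simp [hcdef, cVec, hi]
  have hcq0 : ∀ i : Fin (n + 1), ¬ ((i:ℕ) < s) → cq i = 0 := by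
    intro i hi; simp [hcq, hc0 i hi, zero_pow hq0.ne']
  have hcu : c u = 0 := hc0 u (by have : (u:ℕ) = s + r := rfl; omega)
  have hcv : c v = 0 := hc0 v (by have : (v:ℕ) = s + r + 1 := rfl; omega)
  have hpow2 : ∀ x : k, (x ^ q) ^ q = x ^ q ^ 2 := by
    intro x; rw [← pow_mul, pow_two]
  have heuN : eu = fun i : Fin (n + 1) => if (i : ℕ) = s + r then (1:k) else 0 := by
    funext i; simp [heu, eVec, Fin.ext_iff, hu]
  -- decompositions
  have hG : Gmat k n s r a = G0 + vecMulVec eu c := by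
    rw [Gmat_decomp n s r a, heuN]
  have hT : TGmat k n s r q a = 1 + (vecMulVec ev cq - vecMulVec c eu) :=
    TGmat_decomp n s r q a hq0 hun hvn
  have hG2 : Gmat k n s (r + 2) (fun j => a j ^ q ^ 2) = G0 + vecMulVec ew cq2 := by
    rw [Gmat_decomp (k := k) n s (r + 2) (fun j => a j ^ q ^ 2)]
    have e1 : (fun i : Fin (n + 1) => if (i : ℕ) = s + (r + 2) then (1:k) else 0) = ew := rfl
    have e2 : cVec k n s (fun j => a j ^ q ^ 2) = cq2 := by
      funext j
      simp only [hcq2, hcdef, cVec]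
      split_ifs
      · rfl
      · rw [zero_pow (by positivity)]
    rw [e1, e2]
  have hTt : (TGmat k n s r q a)ᵀ = 1 + (vecMulVec cq ev - vecMulVec eu c) := by
    rw [hT, transpose_add, transpose_sub, transpose_one, vVV_tr, vVV_tr]
  have hφ : ∀ x : k, iterateFrobenius k p e x = x ^ q := by
    intro x; rw [iterateFrobenius_def, hq]
  have hevpow : ∀ i, ev i ^ q = ev i := by
    intro i; simp only [hev, eVec]; split_ifs <;> simp [zero_pow hq0.ne']
  have heupow : ∀ i, eu i ^ q = eu i := by
    intro i; simp only [heu, eVec]; split_ifs <;> simp [zero_pow hq0.ne']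
  have hTq : (TGmat k n s r q a).map (fun x => x ^ q) =
      1 + (vecMulVec ev cq2 - vecMulVec cq eu) := by
    have hf : (fun x : k => x ^ q) = ⇑(iterateFrobenius k p e) := by
      funext x; rw [hφ]
    rw [hf, hT]
    ext i j
    simp only [map_apply, Matrix.add_apply, Matrix.sub_apply, one_apply, vecMulVec_apply]
    rw [_root_.map_add, _root_.map_sub, _root_.map_mul, _root_.map_mul,
      apply_ite (iterateFrobenius k p e), _root_.map_one, _root_.map_zero]
    simp only [hφ, hevpow, heupow, hcq, hcq2, hpow2]
  -- vanishing dot products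
  have dveu : ∑ i, ev i * eu i = 0 := by
    apply Finset.sum_eq_zero
    intro i _
    simp only [hev, heu, eVec]
    split_ifs with h1 h2 <;> simp_all [Fin.ext_iff] <;> omega
  have duev : ∑ i, eu i * ev i = 0 := by
    apply Finset.sum_eq_zero
    intro i _
    simp only [hev, heu, eVec]
    split_ifs with h1 h2 <;> simp_all [Fin.ext_iff] <;> omega
  have dceu : ∑ i, c i * eu i = 0 := by
    rw [show eu = fun i => if i = u then (1:k) else 0 from rfl, sum_single_aux' c u, hcu]
  have duc : ∑ i, eu i * c i = 0 := by
    rw [show eu = fun i => if i = u then (1:k) else 0 from rfl, sum_single_aux c u, hcu]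
  have ducq : ∑ i, eu i * cq i = 0 := by
    rw [show eu = fun i => if i = u then (1:k) else 0 from rfl, sum_single_aux cq u,
      hcq]
    simp only [hcu, zero_pow hq0.ne']
  have dcqev : ∑ i, cq i * ev i = 0 := by
    rw [show ev = fun i => if i = v then (1:k) else 0 from rfl, sum_single_aux' cq v,
      hcq]
    simp only [hcv, zero_pow hq0.ne']
  -- products with G0
  have hevG0 : ev ᵥ* G0 = eu := evG0 hs hvn hun
  have hcG0 : c ᵥ* G0 = c := cG0 c hc0
  have hG0ev : G0 *ᵥ ev = ew := G0evN hvn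
  have hG0cq : G0 *ᵥ cq = cq := G0c cq hcq0
  constructor
  · -- invertibility
    set N : Matrix (Fin (n + 1)) (Fin (n + 1)) k := vecMulVec ev cq - vecMulVec c eu with hN
    have hN2 : N * N = 0 - (∑ i, cq i * c i) • vecMulVec ev eu - (0 - 0) := by
      rw [hN, sub_mul, mul_sub, mul_sub, mulVV, mulVV, mulVV, mulVV,
        dcqev, duev, duc, zero_smul, zero_smul, zero_smul]
    have hN3 : N * (N * N) = 0 := by
      rw [hN2]
      have : (0:Matrix (Fin (n + 1)) (Fin (n + 1)) k) - (∑ i, cq i * c i) • vecMulVec ev eu - (0 - 0)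
          = -((∑ i, cq i * c i) • vecMulVec ev eu) := by abel
      rw [this, mul_neg, mul_smul_comm, hN, sub_mul, mulVV, mulVV, dcqev, duev,
        zero_smul, zero_smul, sub_zero, smul_zero, neg_zero]
    have hinv : TGmat k n s r q a * (1 - N + N * N) = 1 := by
      rw [hT]
      have expand : (1 + N) * (1 - N + N * N) = 1 + N * (N * N) := by
        noncomm_ring
      rw [expand, hN3, add_zero]
    exact Matrix.isUnit_det_of_right_inverse hinv
  · rw [hTt, hG, hTq, hG2]
    have step1 : (1 + (vecMulVec cq ev - vecMulVec eu c)) * (G0 + vecMulVec eu c) =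
        G0 + vecMulVec cq eu := by
      rw [add_mul, one_mul, sub_mul, mul_add, mul_add, mulVV, mulVV, vVV_mul, vVV_mul,
        hevG0, hcG0, dveu, dceu, zero_smul, zero_smul]
      abel
    have step2 : (G0 + vecMulVec cq eu) * (1 + (vecMulVec ev cq2 - vecMulVec cq eu)) =
        G0 + vecMulVec ew cq2 := by
      rw [mul_add, mul_one, add_mul, mul_sub, mul_sub, mulVV, mulVV, mul_vVV, mul_vVV,
        hG0ev, hG0cq, duev, ducq, zero_smul, zero_smul]
      abel
    rw [step1, step2]
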